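/- For every integer c ≥ 1, every ε > 0, and every integer K ≥ 1 there exists a finite family of closed boxes U_α = ∏_{i=1}^{c} [p_{α,i}, q_{α,i}] (α ∈ A, A finite) with −1 ≤ p_{α,i} < q_{α,i} ≤ 2 for all α and i, such that: (1) each U_α has diameter strictly less than ε; (2) the interiors of the U_α cover [0,1]^c; (3) every x ∈ [0,1]^c lies in the interiors of at least K of the boxes U_α whose frontiers are pairwise disjoint; (4) for each i ∈ {1,…,c}, the real numbers {p_{α,i} : α ∈ A} ∪ {q_{α,i} : α ∈ A} are pairwise distinct. -/

import Mathlib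

/-- The closed box `∏ᵢ [pᵢ, qᵢ]` in `ℝ^c`. -/
def closedBox {c : ℕ} (p q : Fin c → ℝ) : Set (EuclideanSpace ℝ (Fin c)) :=
  {x | ∀ i, x i ∈ Set.Icc (p i) (q i)}

def openBox {c : ℕ} (p q : Fin c → ℝ) : Set (EuclideanSpace ℝ (Fin c)) :=
  {x | ∀ i, x i ∈ Set.Ioo (p i) (q i)}

lemma continuous_eval {c : ℕ} (i : Fin c) :
    Continuous (fun x : EuclideanSpace ℝ (Fin c) => x i) :=
  (EuclideanSpace.proj (𝕜 := ℝ) i).continuous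

lemma isClosed_closedBox {c : ℕ} (p q : Fin c → ℝ) : IsClosed (closedBox p q) := by
  have h : closedBox p q =
      ⋂ i, (fun x : EuclideanSpace ℝ (Fin c) => x i) ⁻¹' Set.Icc (p i) (q i) := by
    ext x; simp [closedBox]
  rw [h]
  exact isClosed_iInter fun i => isClosed_Icc.preimage (continuous_eval i)

lemma isOpen_openBox {c : ℕ} (p q : Fin c → ℝ) : IsOpen (openBox p q) := by
  have h : openBox p q =
      ⋂ i, (fun x : EuclideanSpace ℝ (Fin c) => x i) ⁻¹' Set.Ioo (p i) (q i) := by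
    ext x; simp [openBox]
  rw [h]
  exact isOpen_iInter_of_finite fun i => isOpen_Ioo.preimage (continuous_eval i)

lemma openBox_subset_interior {c : ℕ} (p q : Fin c → ℝ) :
    openBox p q ⊆ interior (closedBox p q) :=
  interior_maximal (fun x hx i => Set.Ioo_subset_Icc_self (hx i)) (isOpen_openBox p q)

lemma disjoint_frontiers {c : ℕ} (p1 q1 p2 q2 : Fin c → ℝ)
    (h : closedBox p1 q1 ⊆ openBox p2 q2) :
    Disjoint (frontier (closedBox p1 q1)) (frontier (closedBox p2 q2)) := by
  rw [Set.disjoint_left]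
  intro x hx1 hx2
  have hxc : x ∈ closedBox p1 q1 := by
    have := frontier_subset_closure hx1
    rwa [(isClosed_closedBox p1 q1).closure_eq] at this
  exact hx2.2 (openBox_subset_interior p2 q2 (h hxc))

set_option maxHeartbeats 1600000

/-- For every `c ≥ 1`, `ε > 0` and `K ≥ 1` there is a finite family of closed boxes
`U_α = ∏ᵢ [p_{α,i}, q_{α,i}] ⊆ [-1,2]^c` of diameter `< ε` whose interiors cover
`[0,1]^c`, such that every point of `[0,1]^c` lies in the interiors of at least `K`
boxes with pairwise disjoint frontiers, and such that for each coordinate `i` all the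
endpoints `p_{α,i}, q_{α,i}` are pairwise distinct. -/
theorem stmt8 (c : ℕ) (hc : 1 ≤ c) (ε : ℝ) (hε : 0 < ε) (K : ℕ) (hK : 1 ≤ K) :
    ∃ (n : ℕ) (p q : Fin n → Fin c → ℝ),
      (∀ α i, -1 ≤ p α i ∧ p α i < q α i ∧ q α i ≤ 2) ∧
      (∀ α, EMetric.diam (closedBox (p α) (q α)) < ENNReal.ofReal ε) ∧
      (∀ x : EuclideanSpace ℝ (Fin c), (∀ i, x i ∈ Set.Icc (0 : ℝ) 1) →
        ∃ α, x ∈ interior (closedBox (p α) (q α))) ∧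
      (∀ x : EuclideanSpace ℝ (Fin c), (∀ i, x i ∈ Set.Icc (0 : ℝ) 1) →
        ∃ I : Finset (Fin n), K ≤ I.card ∧
          (∀ α ∈ I, x ∈ interior (closedBox (p α) (q α))) ∧
          (∀ α ∈ I, ∀ β ∈ I, α ≠ β →
            Disjoint (frontier (closedBox (p α) (q α))) (frontier (closedBox (p β) (q β))))) ∧
      (∀ i : Fin c, ∀ α β : Fin n,
        (α ≠ β → p α i ≠ p β i ∧ q α i ≠ q β i) ∧ p α i ≠ q β i) := by
  classical
  -- choose the grid size N
  set N : ℕ := ⌈(2*c:ℝ)/ε⌉₊ + 1 with hNdef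
  have hN0 : 0 < N := Nat.succ_pos _
  have hNR : (0:ℝ) < N := by exact_mod_cast hN0
  have hN1 : (1:ℝ) ≤ N := by exact_mod_cast hN0
  have hNε : (2*c:ℝ)/N < ε := by
    rw [div_lt_iff₀ hNR]
    have h1 : (2*c:ℝ)/ε ≤ ⌈(2*c:ℝ)/ε⌉₊ := Nat.le_ceil _
    rw [div_le_iff₀ hε] at h1
    have hNc : (N:ℝ) = (⌈(2*c:ℝ)/ε⌉₊ : ℝ) + 1 := by
      rw [hNdef]; push_cast; ring
    nlinarith
  -- the index type
  haveI hnonempty : Nonempty ((Fin c → Fin (N+1)) × Fin K) := ⟨fun _ => 0, ⟨0, hK⟩⟩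
  set n := Fintype.card ((Fin c → Fin (N+1)) × Fin K) with hndef
  have hn0 : 0 < n := Fintype.card_pos
  have hnR : (0:ℝ) < n := by exact_mod_cast hn0
  obtain ⟨e⟩ : Nonempty (((Fin c → Fin (N+1)) × Fin K) ≃ Fin n) := ⟨Fintype.equivFin _⟩
  -- grid positions, centers and radii
  set g : Fin n → Fin c → ℕ := fun α i => ((e.symm α).1 i : ℕ) with hgdef
  have hgle : ∀ α i, g α i ≤ N := fun α i => Fin.is_le _
  set m : Fin n → Fin c → ℝ := fun α i => (g α i : ℝ) / N with hmdef
  set r : Fin n → ℝ := fun α => (3*(n:ℝ) + (α:ℕ)) / (4*N*n) with hrdef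
  have hm0 : ∀ α i, 0 ≤ m α i := by intro α i; rw [hmdef]; positivity
  have hm1 : ∀ α i, m α i ≤ 1 := by
    intro α i
    rw [hmdef]
    have := hgle α i
    rw [div_le_one hNR]
    exact_mod_cast this
  have hr_lb : ∀ α, 3/(4*(N:ℝ)) ≤ r α := by
    intro α
    rw [hrdef, div_le_div_iff₀ (by positivity) (by positivity)]
    have h0 : (0:ℝ) ≤ ((α:ℕ):ℝ) := by positivity
    nlinarith
  have hr_ub : ∀ α, r α < 1/(N:ℝ) := by
    intro α
    rw [hrdef, div_lt_div_iff₀ (by positivity) hNR]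
    have hα : ((α:ℕ):ℝ) < n := by exact_mod_cast α.is_lt
    nlinarith
  have hr_pos : ∀ α, 0 < r α := fun α => lt_of_lt_of_le (by positivity) (hr_lb α)
  -- the numerator form of the endpoints
  have hkey : ∀ α i, (m α i - r α) * (4*N*n) = 4*(n:ℝ)*(g α i) - (3*n + (α:ℕ)) ∧
      (m α i + r α) * (4*N*n) = 4*(n:ℝ)*(g α i) + (3*n + (α:ℕ)) := by
    intro α i
    rw [hmdef, hrdef]
    constructor <;> · field_simp
  clear_value n N g m r
  clear hndef hNdef hnonempty
  -- nested boxes with common centre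
  have hsub : ∀ γ δ : Fin n, (∀ i, m γ i = m δ i) → r γ < r δ →
      closedBox (fun i => m γ i - r γ) (fun i => m γ i + r γ) ⊆
        openBox (fun i => m δ i - r δ) (fun i => m δ i + r δ) := by
    intro γ δ hmeq hrlt z hz i
    have h1 : m γ i - r γ ≤ z i := (hz i).1
    have h2 : z i ≤ m γ i + r γ := (hz i).2
    have h3 := hmeq i
    exact ⟨show m δ i - r δ < z i by linarith, show z i < m δ i + r δ by linarith⟩
  -- the grid point closest to x
  have cover : ∀ x : EuclideanSpace ℝ (Fin c), (∀ i, x i ∈ Set.Icc (0:ℝ) 1) →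
      ∃ G : Fin c → Fin (N+1), ∀ α : Fin n, (e.symm α).1 = G →
        x ∈ openBox (fun i => m α i - r α) (fun i => m α i + r α) := by
    intro x hx
    have hround : ∀ i : Fin c, ∃ gi : Fin (N+1), |x i - ((gi:ℕ):ℝ)/(N:ℝ)| ≤ 1/(2*(N:ℝ)) := by
      intro i
      have h0 : (0:ℝ) ≤ x i * N := mul_nonneg (hx i).1 hNR.le
      have h1 : x i * N ≤ N := by
        have h2 := (hx i).2
        nlinarith
      have hnn : 0 ≤ round (x i * N) := by
        rw [round_eq]
        exact Int.le_floor.2 (by push_cast; linarith)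
      have hub : round (x i * N) < (N:ℤ) + 1 := by
        rw [round_eq]
        apply Int.floor_lt.2
        push_cast
        linarith
      refine ⟨⟨(round (x i * N)).toNat, by omega⟩, ?_⟩
      have hcast : (((round (x i * N)).toNat : ℕ) : ℝ) = ((round (x i * N) : ℤ) : ℝ) := by
        exact_mod_cast congrArg (fun z : ℤ => (z : ℝ)) (Int.toNat_of_nonneg hnn)
      have habs := abs_sub_round (x i * N)
      have hxe : x i - (((round (x i * N)).toNat : ℕ) : ℝ)/(N:ℝ)
          = (x i * N - ((round (x i * N) : ℤ):ℝ))/(N:ℝ) := by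
        rw [hcast]
        field_simp
      rw [hxe, abs_div, abs_of_pos hNR]
      calc |x i * N - ((round (x i * N) : ℤ):ℝ)| / (N:ℝ) ≤ (1/2)/(N:ℝ) := by gcongr
        _ = 1/(2*(N:ℝ)) := by ring
    choose G hG using hround
    refine ⟨G, ?_⟩
    intro α hα i
    have hm : m α i = ((G i : ℕ):ℝ)/(N:ℝ) := by simp only [hmdef, hgdef, hα]
    have h1 := abs_le.1 (hG i)
    have h2 := hr_lb α
    have h3 : (1:ℝ)/(2*(N:ℝ)) < 3/(4*(N:ℝ)) := by
      rw [div_lt_div_iff₀ (by positivity) (by positivity)]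
      nlinarith
    exact ⟨show m α i - r α < x i by linarith [h1.1, h1.2],
      show x i < m α i + r α by linarith [h1.1, h1.2]⟩
  refine ⟨n, fun α i => m α i - r α, fun α i => m α i + r α, ?_, ?_, ?_, ?_, ?_⟩
  · -- bounds
    intro α i
    have h1 := hm0 α i; have h2 := hm1 α i
    have h3 := hr_pos α; have h4 := hr_ub α
    have h5 : 1/(N:ℝ) ≤ 1 := by rw [div_le_one hNR]; exact hN1
    refine ⟨?_, ?_, ?_⟩
    · show -1 ≤ m α i - r α; linarith
    · show m α i - r α < m α i + r α; linarith
    · show m α i + r α ≤ 2; linarith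
  · -- diameter
    intro α
    have hle : EMetric.diam (closedBox (fun i => m α i - r α) (fun i => m α i + r α))
        ≤ ENNReal.ofReal ((2*c:ℝ)/N) := by
      apply EMetric.diam_le
      intro x hx y hy
      rw [edist_dist]
      apply ENNReal.ofReal_le_ofReal
      have hx' : ∀ i, m α i - r α ≤ x i ∧ x i ≤ m α i + r α := fun i => ⟨(hx i).1, (hx i).2⟩
      have hy' : ∀ i, m α i - r α ≤ y i ∧ y i ≤ m α i + r α := fun i => ⟨(hy i).1, (hy i).2⟩
      have hco : ∀ i, dist (x i) (y i) ≤ 2/(N:ℝ) := by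
        intro i
        have hx1 := (hx' i).1; have hx2 := (hx' i).2
        have hy1 := (hy' i).1; have hy2 := (hy' i).2
        have h2r : 2 * r α ≤ 2/(N:ℝ) := by
          have h1 := hr_ub α
          have h2 : (2:ℝ)/(N:ℝ) = 2*(1/(N:ℝ)) := by ring
          linarith
        rw [Real.dist_eq, abs_le]
        constructor <;> linarith
      rw [EuclideanSpace.dist_eq]
      have hsum : (∑ i, dist (x i) (y i)^2) ≤ (2*(c:ℝ)/N)^2 := by
        calc (∑ i, dist (x i) (y i)^2) ≤ ∑ _i : Fin c, (2/(N:ℝ))^2 := by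
              apply Finset.sum_le_sum
              intro i _
              have h := hco i
              have := dist_nonneg (x := x i) (y := y i)
              nlinarith
          _ = (c:ℝ) * (2/(N:ℝ))^2 := by rw [Finset.sum_const, Finset.card_univ, Fintype.card_fin, nsmul_eq_mul]
          _ ≤ (2*(c:ℝ)/N)^2 := by
              have hc1 : (1:ℝ) ≤ c := by exact_mod_cast hc
              have : (c:ℝ) ≤ (c:ℝ)^2 := by nlinarith
              have h4 : (0:ℝ) < (2/(N:ℝ))^2 := by positivity
              calc (c:ℝ) * (2/(N:ℝ))^2 ≤ (c:ℝ)^2 * (2/(N:ℝ))^2 := by nlinarith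
                _ = (2*(c:ℝ)/N)^2 := by ring
      calc √(∑ i, dist (x i) (y i)^2) ≤ √((2*(c:ℝ)/N)^2) := Real.sqrt_le_sqrt hsum
        _ = 2*(c:ℝ)/N := Real.sqrt_sq (by positivity)
    exact lt_of_le_of_lt hle ((ENNReal.ofReal_lt_ofReal_iff hε).2 hNε)
  · -- single cover
    intro x hx
    obtain ⟨G, hG⟩ := cover x hx
    exact ⟨e (G, ⟨0, hK⟩), openBox_subset_interior _ _ (hG _ (by simp))⟩
  · -- K-fold cover
    intro x hx
    obtain ⟨G, hG⟩ := cover x hx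
    refine ⟨Finset.image (fun j : Fin K => e (G, j)) Finset.univ, ?_, ?_, ?_⟩
    · have hinj : Function.Injective (fun j : Fin K => e (G, j)) := by
        intro a b hab
        have h := e.injective hab
        exact (Prod.mk.injEq _ _ _ _ ▸ h).2
      rw [Finset.card_image_of_injective _ hinj, Finset.card_univ, Fintype.card_fin]
    · intro α hα
      rw [Finset.mem_image] at hα
      obtain ⟨j, -, rfl⟩ := hα
      exact openBox_subset_interior _ _ (hG _ (by simp))
    · intro α hα β hβ hne
      rw [Finset.mem_image] at hα hβ
      obtain ⟨j, -, rfl⟩ := hα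
      obtain ⟨j', -, rfl⟩ := hβ
      have hGα : (e.symm (e (G, j))).1 = G := by simp
      have hGβ : (e.symm (e (G, j'))).1 = G := by simp
      have hmeq : ∀ i, m (e (G, j)) i = m (e (G, j')) i := by
        intro i
        simp only [hmdef, hgdef, hGα, hGβ]
      have hrne : r (e (G, j)) ≠ r (e (G, j')) := by
        intro hr
        apply hne
        simp only [hrdef] at hr
        have hcast : (((e (G, j) : ℕ)):ℝ) = (((e (G, j') : ℕ)):ℝ) := by
          have hD : (0:ℝ) < 4*(N:ℝ)*n := by positivity
          rw [div_eq_div_iff (by positivity) (by positivity)] at hr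
          nlinarith
        exact Fin.ext (by exact_mod_cast hcast)
      rcases lt_or_gt_of_ne hrne with h'|h'
      · exact disjoint_frontiers _ _ _ _ (hsub _ _ hmeq h')
      · exact (disjoint_frontiers _ _ _ _ (hsub _ _ (fun i => (hmeq i).symm) h')).symm
  · -- distinctness of endpoints
    intro i α β
    have hD : (0:ℝ) < 4*(N:ℝ)*n := by positivity
    have hαn : ((α:ℕ):ℝ) < n := by exact_mod_cast α.is_lt
    have hβn : ((β:ℕ):ℝ) < n := by exact_mod_cast β.is_lt
    have hα0 : (0:ℝ) ≤ ((α:ℕ):ℝ) := by positivity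
    have hβ0 : (0:ℝ) ≤ ((β:ℕ):ℝ) := by positivity
    have cast_lt : ∀ γ : Fin n, ((γ:ℕ):ℤ) < (n:ℤ) := fun γ => by exact_mod_cast γ.is_lt
    constructor
    · intro hab
      constructor
      · intro h
        apply hab
        have h' : m α i - r α = m β i - r β := h
        have h2 : (m α i - r α) * (4*N*n) = (m β i - r β) * (4*N*n) := by rw [h']
        rw [(hkey α i).1, (hkey β i).1] at h2
        -- 4n(gα - gβ) = α - β over ℝ, hence over ℤ
        have h3 : 4*(n:ℤ)*((g α i : ℤ) - (g β i : ℤ)) = ((α:ℕ):ℤ) - ((β:ℕ):ℤ) := by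
          have : 4*(n:ℝ)*((g α i : ℝ) - (g β i : ℝ)) = ((α:ℕ):ℝ) - ((β:ℕ):ℝ) := by linarith
          exact_mod_cast this
        have hg0 : (g α i : ℤ) = (g β i : ℤ) := by
          by_contra hne
          have hn' : (1:ℤ) ≤ (n:ℤ) := by exact_mod_cast hn0
          have hA := cast_lt α; have hB := cast_lt β
          have hA0 : (0:ℤ) ≤ ((α:ℕ):ℤ) := by positivity
          have hB0 : (0:ℤ) ≤ ((β:ℕ):ℤ) := by positivity
          rcases lt_or_gt_of_ne hne with h'|h'
          · have hd : (g α i : ℤ) - (g β i : ℤ) ≤ -1 := by omega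
            nlinarith
          · have hd : (1:ℤ) ≤ (g α i : ℤ) - (g β i : ℤ) := by omega
            nlinarith
        rw [hg0, sub_self, mul_zero] at h3
        have : ((α:ℕ):ℤ) = ((β:ℕ):ℤ) := by omega
        exact Fin.ext (by exact_mod_cast this)
      · intro h
        apply hab
        have h' : m α i + r α = m β i + r β := h
        have h2 : (m α i + r α) * (4*N*n) = (m β i + r β) * (4*N*n) := by rw [h']
        rw [(hkey α i).2, (hkey β i).2] at h2
        have h3 : 4*(n:ℤ)*((g α i : ℤ) - (g β i : ℤ)) = ((β:ℕ):ℤ) - ((α:ℕ):ℤ) := by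
          have : 4*(n:ℝ)*((g α i : ℝ) - (g β i : ℝ)) = ((β:ℕ):ℝ) - ((α:ℕ):ℝ) := by linarith
          exact_mod_cast this
        have hg0 : (g α i : ℤ) = (g β i : ℤ) := by
          by_contra hne
          have hn' : (1:ℤ) ≤ (n:ℤ) := by exact_mod_cast hn0
          have hA := cast_lt α; have hB := cast_lt β
          have hA0 : (0:ℤ) ≤ ((α:ℕ):ℤ) := by positivity
          have hB0 : (0:ℤ) ≤ ((β:ℕ):ℤ) := by positivity
          rcases lt_or_gt_of_ne hne with h'|h'
          · have hd : (g α i : ℤ) - (g β i : ℤ) ≤ -1 := by omega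
            nlinarith
          · have hd : (1:ℤ) ≤ (g α i : ℤ) - (g β i : ℤ) := by omega
            nlinarith
        rw [hg0, sub_self, mul_zero] at h3
        have : ((α:ℕ):ℤ) = ((β:ℕ):ℤ) := by omega
        exact Fin.ext (by exact_mod_cast this)
    · intro h
      have h' : m α i - r α = m β i + r β := h
      have h2 : (m α i - r α) * (4*N*n) = (m β i + r β) * (4*N*n) := by rw [h']
      rw [(hkey α i).1, (hkey β i).2] at h2
      have h3 : 4*(n:ℤ)*((g α i : ℤ) - (g β i : ℤ)) = 6*(n:ℤ) + ((α:ℕ):ℤ) + ((β:ℕ):ℤ) := by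
        have : 4*(n:ℝ)*((g α i : ℝ) - (g β i : ℝ)) = 6*(n:ℝ) + ((α:ℕ):ℝ) + ((β:ℕ):ℝ) := by
          linarith
        exact_mod_cast this
      have hn' : (1:ℤ) ≤ (n:ℤ) := by exact_mod_cast hn0
      have hA := cast_lt α; have hB := cast_lt β
      have hA0 : (0:ℤ) ≤ ((α:ℕ):ℤ) := by positivity
      have hB0 : (0:ℤ) ≤ ((β:ℕ):ℤ) := by positivity
      set d : ℤ := (g α i : ℤ) - (g β i : ℤ) with hddef
      rcases le_or_gt d 1 with h'|h'
      · nlinarith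
      · have : (2:ℤ) ≤ d := by omega
        nlinarith
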